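/- Let M_1 and M_2 be d×d complex matrices. Then the following are equivalent: (1) there exists a d×d unitary matrix V such that Δ(V* M_2* M_1 V) = 0; (2) there exist an integer r ≥ d and a d×r complex matrix W with W W* = I_d such that Δ(W* M_2* M_1 W) = 0; (3) Tr(M_2* M_1) = 0. -/

import Mathlib

open Matrix

/-- The diagonal truncation map Δ: zeros out off-diagonal entries. -/
def delta {n : Type*} [DecidableEq n] (M : Matrix n n ℂ) : Matrix n n ℂ :=
  Matrix.diagonal (fun i => M i i)


lemma zsolve (δ b c : ℂ) (t : ℝ) (h0 : 0 < t) (h1 : t < 1) :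
    ∃ z : ℂ, ((1 - t : ℂ)) * δ + z * b + (starRingEnd ℂ) z * c
      - (t : ℂ) * ((starRingEnd ℂ) z * z) * δ = 0 := by
  by_cases hδ : δ = 0
  · exact ⟨0, by simp [hδ]⟩
  set m : ℂ := (starRingEnd ℂ) δ * b - δ * (starRingEnd ℂ) c with hm
  set u : ℂ := if m = 0 then 1 else (starRingEnd ℂ) m / (‖m‖ : ℂ) with hudef
  have hu : (starRingEnd ℂ) u * u = 1 := by
    by_cases h : m = 0
    · simp [hudef, h]
    · have habs : (‖m‖ : ℝ) ≠ 0 := norm_ne_zero_iff.mpr h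
      have hns : Complex.normSq m ≠ 0 := by simpa [Complex.normSq_eq_zero] using h
      rw [hudef, if_neg h, map_div₀, Complex.conj_conj, Complex.conj_ofReal,
        div_mul_div_comm, Complex.mul_conj,
        ← Complex.ofReal_mul, Complex.norm_mul_self_eq_normSq, div_self]
      exact_mod_cast hns
  have hmu : (starRingEnd ℂ) (m * u) = m * u := by
    by_cases h : m = 0
    · simp [h]
    · simp only [hudef, if_neg h, _root_.map_mul, map_div₀, Complex.conj_conj,
        Complex.conj_ofReal]
      ring
  set w : ℂ := u * b + (starRingEnd ℂ) u * c with hwdef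
  have key : (starRingEnd ℂ) ((starRingEnd ℂ) δ * w) = (starRingEnd ℂ) δ * w := by
    have expand : (starRingEnd ℂ) ((starRingEnd ℂ) δ * w) - (starRingEnd ℂ) δ * w
        = (starRingEnd ℂ) (m * u) - m * u := by
      simp only [hwdef, hm, map_sub, map_add, _root_.map_mul, Complex.conj_conj]
      ring
    rw [hmu, sub_self] at expand
    linear_combination expand
  have hreal : (starRingEnd ℂ) δ * w = (((starRingEnd ℂ) δ * w).re : ℂ) :=
    (Complex.conj_eq_iff_re.mp key).symm
  set lam : ℝ := ((starRingEnd ℂ) δ * w).re / Complex.normSq δ with hlam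
  have hnsqR : Complex.normSq δ ≠ 0 := by simpa [Complex.normSq_eq_zero] using hδ
  have hnsq : (Complex.normSq δ : ℂ) ≠ 0 := by exact_mod_cast hnsqR
  have h2 : (Complex.normSq δ : ℂ) * w = δ * (((starRingEnd ℂ) δ * w).re : ℂ) := by
    rw [← Complex.mul_conj, ← hreal]; ring
  have hwd : w = (lam : ℂ) * δ := by
    rw [hlam]; push_cast
    rw [div_mul_eq_mul_div, eq_div_iff hnsq]
    linear_combination h2
  set s : ℝ := Real.sqrt (lam ^ 2 + 4 * t * (1 - t)) with hs
  have hs2 : s ^ 2 = lam ^ 2 + 4 * t * (1 - t) := Real.sq_sqrt (by nlinarith)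
  set r : ℝ := (lam + s) / (2 * t) with hrdef
  have hr : t * r ^ 2 - lam * r - (1 - t) = 0 := by
    have ht : (2 * t) ≠ 0 := by positivity
    rw [hrdef]
    field_simp
    nlinarith [hs2]
  have hrC : (t : ℂ) * (r : ℂ) ^ 2 - (lam : ℂ) * r - (1 - t) = 0 := by
    exact_mod_cast congrArg (Complex.ofReal) hr
  refine ⟨(r : ℂ) * u, ?_⟩
  have hcz : (starRingEnd ℂ) ((r : ℂ) * u) = (r : ℂ) * (starRingEnd ℂ) u := by
    simp [Complex.conj_ofReal]
  rw [hcz]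
  have hwd' : u * b + (starRingEnd ℂ) u * c = (lam : ℂ) * δ := hwd
  linear_combination (r : ℂ) * hwd' - ((t : ℂ) * (r : ℂ) ^ 2 * δ) * hu - δ * hrC


section aux
variable {d : ℕ}

/-- inner product -/
noncomputable def ip {d : ℕ} (x y : Fin d → ℂ) : ℂ := star x ⬝ᵥ y
/-- quadratic form -/
noncomputable def qf {d : ℕ} (A : Matrix (Fin d) (Fin d) ℂ) (v : Fin d → ℂ) : ℂ := star v ⬝ᵥ A.mulVec v

lemma ip_conj (x y : Fin d → ℂ) : ip x y = (starRingEnd ℂ) (ip y x) := by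
  simp [ip, dotProduct, map_sum, mul_comm]

lemma ip_expand (p q p' q' : Fin d → ℂ) (a b a' b' : ℂ) :
    ip (a • p + b • q) (a' • p' + b' • q')
      = (starRingEnd ℂ) a * a' * ip p p' + (starRingEnd ℂ) a * b' * ip p q'
        + (starRingEnd ℂ) b * a' * ip q p' + (starRingEnd ℂ) b * b' * ip q q' := by
  simp [ip, star_add, star_smul, add_dotProduct, smul_dotProduct, dotProduct_add,
    dotProduct_smul, smul_eq_mul]
  ring

lemma ip_right (u p q : Fin d → ℂ) (a b : ℂ) :
    ip u (a • p + b • q) = a * ip u p + b * ip u q := by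
  simp [ip, dotProduct_add, dotProduct_smul, smul_eq_mul]

lemma qf_expand (A : Matrix (Fin d) (Fin d) ℂ) (p q : Fin d → ℂ) (a b : ℂ) :
    qf A (a • p + b • q)
      = (starRingEnd ℂ) a * a * qf A p + (starRingEnd ℂ) a * b * (star p ⬝ᵥ A.mulVec q)
        + (starRingEnd ℂ) b * a * (star q ⬝ᵥ A.mulVec p) + (starRingEnd ℂ) b * b * qf A q := by
  simp [qf, mulVec_add, mulVec_smul, star_add, star_smul, add_dotProduct, smul_dotProduct,
    dotProduct_add, dotProduct_smul, smul_eq_mul]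
  ring

end aux


lemma pair_step {d : ℕ} (A : Matrix (Fin d) (Fin d) ℂ) (x y : Fin d → ℂ)
    (hx : ip x x = 1) (hy : ip y y = 1) (hxy : ip x y = 0)
    (t : ℝ) (ht0 : 0 ≤ t) (ht1 : t ≤ 1) :
    ∃ v w : Fin d → ℂ,
      (∃ a b : ℂ, v = a • x + b • y) ∧ (∃ a b : ℂ, w = a • x + b • y) ∧
      ip v v = 1 ∧ ip w w = 1 ∧ ip v w = 0 ∧
      qf A v = (t : ℂ) * qf A x + (1 - (t : ℂ)) * qf A y ∧
      qf A v + qf A w = qf A x + qf A y := by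
  have hyx : ip y x = 0 := by rw [ip_conj, hxy, map_zero]
  have hx1 : x = (1:ℂ) • x + (0:ℂ) • y := by simp
  have hy1 : y = (0:ℂ) • x + (1:ℂ) • y := by simp
  rcases eq_or_lt_of_le ht0 with h0 | h0
  · -- t = 0 : take v = y, w = x
    refine ⟨y, x, ⟨0, 1, hy1⟩, ⟨1, 0, hx1⟩, hy, hx, hyx, ?_, by ring⟩
    rw [← h0]; push_cast; ring
  rcases eq_or_lt_of_le ht1 with h1 | h1
  · -- t = 1 : take v = x, w = y
    refine ⟨x, y, ⟨1, 0, hx1⟩, ⟨0, 1, hy1⟩, hx, hy, hxy, ?_, by ring⟩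
    rw [h1]; push_cast; ring
  -- 0 < t < 1
  set qx := qf A x with hqx
  set qy := qf A y with hqy
  set bb := star x ⬝ᵥ A.mulVec y with hbb
  set cc := star y ⬝ᵥ A.mulVec x with hcc
  obtain ⟨z, hz⟩ := zsolve (qx - qy) bb cc t h0 h1
  set R : ℝ := Real.sqrt (1 + Complex.normSq z) with hR
  have hnn : (0:ℝ) ≤ Complex.normSq z := Complex.normSq_nonneg z
  have h1R : (0:ℝ) < 1 + Complex.normSq z := by linarith
  have hRpos : 0 < R := Real.sqrt_pos.mpr h1R
  have hcast : ((Complex.normSq z : ℝ) : ℂ) = (starRingEnd ℂ) z * z := by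
    rw [mul_comm]; exact (Complex.mul_conj z).symm
  have hRC : (R : ℂ) * R = 1 + (starRingEnd ℂ) z * z := by
    rw [← Complex.ofReal_mul, Real.mul_self_sqrt h1R.le]
    push_cast [hcast]
    ring
  set a : ℂ := (R : ℂ)⁻¹ with ha
  have hca : (starRingEnd ℂ) a = a := by
    rw [ha, map_inv₀, Complex.conj_ofReal]
  have hRne : (R : ℂ) ≠ 0 := by exact_mod_cast hRpos.ne'
  have hinv : a * a * (1 + (starRingEnd ℂ) z * z) = 1 := by
    rw [← hRC, ha]; field_simp
  set b : ℂ := a * z with hb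
  set c2 : ℂ := -(a * (starRingEnd ℂ) z) with hc2
  have hcb : (starRingEnd ℂ) b = a * (starRingEnd ℂ) z := by
    rw [hb, _root_.map_mul, hca]
  have hcc2 : (starRingEnd ℂ) c2 = -(a * z) := by
    rw [hc2, map_neg, _root_.map_mul, hca, Complex.conj_conj]
  refine ⟨a • x + b • y, c2 • x + a • y, ⟨a, b, rfl⟩, ⟨c2, a, rfl⟩, ?_, ?_, ?_, ?_, ?_⟩
  · rw [ip_expand, hx, hy, hxy, hyx, hca, hcb, hb]
    linear_combination hinv
  · rw [ip_expand, hx, hy, hxy, hyx, hca, hcc2, hc2]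
    linear_combination hinv
  · rw [ip_expand, hx, hy, hxy, hyx, hca, hcb, hc2]
    ring
  · rw [qf_expand, ← hqx, ← hqy, ← hbb, ← hcc, hca, hcb, hb]
    have expand : a * a * qx + a * (a * z) * bb + a * (starRingEnd ℂ) z * a * cc
        + a * (starRingEnd ℂ) z * (a * z) * qy
        = a * a * ((1 + (starRingEnd ℂ) z * z) * ((t:ℂ) * qx + (1 - (t:ℂ)) * qy))
          + a * a * (((1 - t : ℂ)) * (qx - qy) + z * bb + (starRingEnd ℂ) z * cc
            - (t : ℂ) * ((starRingEnd ℂ) z * z) * (qx - qy)) := by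
      ring
    rw [expand, hz, ← mul_assoc, hinv]
    ring
  · rw [qf_expand, qf_expand, ← hqx, ← hqy, ← hbb, ← hcc, hca, hcb, hcc2, hb, hc2]
    have expand : (a * a * qx + a * (a * z) * bb + a * (starRingEnd ℂ) z * a * cc
          + a * (starRingEnd ℂ) z * (a * z) * qy)
        + (-(a * z) * -(a * (starRingEnd ℂ) z) * qx + -(a * z) * a * bb
          + a * -(a * (starRingEnd ℂ) z) * cc + a * a * qy)
        = (a * a * (1 + (starRingEnd ℂ) z * z)) * (qx + qy) := by ring
    linear_combination expand + (qx + qy) * hinv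


lemma ip_left_zero {d : ℕ} (x y m : Fin d → ℂ) (a b : ℂ) (h : ip x m = 0) (h' : ip y m = 0) :
    ip (a • x + b • y) m = 0 := by
  have hmx : ip m x = 0 := by rw [ip_conj, h, map_zero]
  have hmy : ip m y = 0 := by rw [ip_conj, h', map_zero]
  rw [ip_conj, ip_right, hmx, hmy]
  simp

lemma merge {d : ℕ} (A : Matrix (Fin d) (Fin d) ℂ) :
    ∀ k (x : Fin (k+1) → (Fin d → ℂ)),
    (∀ i j, ip (x i) (x j) = if i = j then 1 else 0) →
    ∀ (t : Fin (k+1) → ℝ), (∀ i, 0 ≤ t i) → (∑ i, t i) = 1 →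
    (∑ i, (t i : ℂ) * qf A (x i)) = 0 →
    ∃ (v : Fin d → ℂ) (w : Fin k → (Fin d → ℂ)),
      ip v v = 1 ∧ (∀ j, ip v (w j) = 0) ∧
      (∀ i j, ip (w i) (w j) = if i = j then 1 else 0) ∧
      qf A v = 0 ∧
      (qf A v + ∑ j, qf A (w j) = ∑ i, qf A (x i)) ∧
      (∀ u, (∀ i, ip u (x i) = 0) → ip u v = 0 ∧ ∀ j, ip u (w j) = 0) := by
  intro k
  induction k with
  | zero =>
    intro x horth t ht hsum hq
    have ht0 : t 0 = 1 := by simpa using hsum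
    have hq0 : qf A (x 0) = 0 := by
      have : ((t 0 : ℝ) : ℂ) * qf A (x 0) = 0 := by simpa using hq
      rw [ht0] at this; simpa using this
    refine ⟨x 0, fun j => j.elim0, by simpa using horth 0 0, fun j => j.elim0,
      fun i => i.elim0, hq0, by simp, ?_⟩
    intro u hu
    exact ⟨hu 0, fun j => j.elim0⟩
  | succ k IH =>
    intro x horth t ht hsum hq
    have h01 : (0 : Fin (k+2)) ≠ 1 := by simp [Fin.ext_iff]
    set T : ℝ := t 0 + t 1 with hT
    set τ : ℝ := if T = 0 then 0 else t 0 / T with hτ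
    have hTnn : 0 ≤ T := by have := ht 0; have := ht 1; linarith
    have hτ0 : 0 ≤ τ := by
      rw [hτ]; split
      · exact le_rfl
      · exact div_nonneg (ht 0) hTnn
    have hτ1 : τ ≤ 1 := by
      rw [hτ]; split
      · exact zero_le_one
      · rename_i h
        have hTpos : 0 < T := lt_of_le_of_ne hTnn (Ne.symm h)
        rw [div_le_one hTpos]
        have := ht 1; rw [hT]; linarith
    have hTτ0 : T * τ = t 0 := by
      rw [hτ]; split
      · rename_i h
        have h0' : t 0 = 0 := by
          have := ht 0; have := ht 1
          have : t 0 ≤ 0 := by rw [hT] at h; linarith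
          linarith [ht 0]
        simp [h0']
      · rename_i h; field_simp
    have hTτ1 : T * (1 - τ) = t 1 := by
      have : T * (1 - τ) = T - T * τ := by ring
      rw [this, hTτ0, hT]; ring
    have hx00 : ip (x 0) (x 0) = 1 := by simpa using horth 0 0
    have hx11 : ip (x 1) (x 1) = 1 := by simpa using horth 1 1
    have hx01 : ip (x 0) (x 1) = 0 := by
      have := horth 0 1; rwa [if_neg h01] at this
    obtain ⟨v₁, w₁, ⟨a₁, b₁, hv₁⟩, ⟨a₂, b₂, hw₁⟩, hv₁v₁, hw₁w₁, hv₁w₁, hqv₁, hsum₁⟩ :=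
      pair_step A (x 0) (x 1) hx00 hx11 hx01 τ hτ0 hτ1
    have hxm0 : ∀ i : Fin k, ((0 : Fin (k+2)) ≠ i.succ.succ) :=
      fun i => (Fin.succ_ne_zero i.succ).symm
    have hxm1 : ∀ i : Fin k, ((1 : Fin (k+2)) ≠ i.succ.succ) := by
      intro i h
      exact Fin.succ_ne_zero i ((Fin.succ_injective _) (Fin.succ_zero_eq_one.trans h).symm)
    have h0m : ∀ i : Fin k, ip (x 0) (x i.succ.succ) = 0 := by
      intro i; have := horth 0 i.succ.succ; rwa [if_neg (hxm0 i)] at this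
    have h1m : ∀ i : Fin k, ip (x 1) (x i.succ.succ) = 0 := by
      intro i; have := horth 1 i.succ.succ; rwa [if_neg (hxm1 i)] at this
    have hv₁x : ∀ i : Fin k, ip v₁ (x i.succ.succ) = 0 := by
      intro i; rw [hv₁]; exact ip_left_zero _ _ _ _ _ (h0m i) (h1m i)
    have hw₁x : ∀ i : Fin k, ip w₁ (x i.succ.succ) = 0 := by
      intro i; rw [hw₁]; exact ip_left_zero _ _ _ _ _ (h0m i) (h1m i)
    set x' : Fin (k+1) → (Fin d → ℂ) := Fin.cons v₁ (fun i => x i.succ.succ) with hx'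
    set t' : Fin (k+1) → ℝ := Fin.cons T (fun i => t i.succ.succ) with ht'
    have horth' : ∀ i j, ip (x' i) (x' j) = if i = j then 1 else 0 := by
      intro i j
      induction i using Fin.cases with
      | zero =>
        induction j using Fin.cases with
        | zero => simpa [hx'] using hv₁v₁
        | succ j' =>
          rw [if_neg (Fin.succ_ne_zero j').symm]
          simpa [hx'] using hv₁x j'
      | succ i' =>
        induction j using Fin.cases with
        | zero =>
          rw [if_neg (Fin.succ_ne_zero i')]
          simp only [hx', Fin.cons_zero, Fin.cons_succ]
          rw [ip_conj, hv₁x i', map_zero]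
        | succ j' =>
          simp only [hx', Fin.cons_succ]
          rw [horth]
          simp [Fin.succ_inj]
    have ht'nn : ∀ i, 0 ≤ t' i := by
      intro i
      induction i using Fin.cases with
      | zero => simpa [ht'] using hTnn
      | succ i' => simpa [ht'] using ht i'.succ.succ
    have hsumx : ∑ i, t i = t 0 + t 1 + ∑ i : Fin k, t i.succ.succ := by
      rw [Fin.sum_univ_succ, Fin.sum_univ_succ]
      simp [Fin.succ_zero_eq_one, add_assoc]
    have hsum' : ∑ i, t' i = 1 := by
      rw [Fin.sum_univ_succ]
      simp only [ht', Fin.cons_zero, Fin.cons_succ]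
      rw [← hsum, hsumx, hT]
      try ring
    have hqx : ∑ i, (t i : ℂ) * qf A (x i)
        = (t 0 : ℂ) * qf A (x 0) + (t 1 : ℂ) * qf A (x 1)
          + ∑ i : Fin k, (t i.succ.succ : ℂ) * qf A (x i.succ.succ) := by
      rw [Fin.sum_univ_succ, Fin.sum_univ_succ]
      simp [Fin.succ_zero_eq_one, add_assoc]
    have c0 : (T : ℂ) * (τ : ℂ) = ((t 0 : ℝ) : ℂ) := by
      rw [← Complex.ofReal_mul, hTτ0]
    have c1 : (T : ℂ) * (1 - (τ : ℂ)) = ((t 1 : ℝ) : ℂ) := by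
      rw [show ((1 : ℂ) - (τ:ℝ)) = (((1 - τ : ℝ)) : ℂ) by push_cast; ring,
        ← Complex.ofReal_mul, hTτ1]
    have hq' : ∑ i, (t' i : ℂ) * qf A (x' i) = 0 := by
      rw [Fin.sum_univ_succ]
      simp only [ht', hx', Fin.cons_zero, Fin.cons_succ]
      have hTv : (T : ℂ) * qf A v₁
          = (t 0 : ℂ) * qf A (x 0) + (t 1 : ℂ) * qf A (x 1) := by
        rw [hqv₁]
        linear_combination qf A (x 0) * c0 + qf A (x 1) * c1
      rw [hTv, ← hq, hqx]
      try ring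
    obtain ⟨v, w', hv, hvw', horthw', hqv, hsumv, hside⟩ := IH x' horth' t' ht'nn hsum' hq'
    have hw₁x' : ∀ i, ip w₁ (x' i) = 0 := by
      intro i
      induction i using Fin.cases with
      | zero =>
        simp only [hx', Fin.cons_zero]
        rw [ip_conj, hv₁w₁, map_zero]
      | succ i' => simpa [hx'] using hw₁x i'
    obtain ⟨hw₁v, hw₁w'⟩ := hside w₁ hw₁x'
    refine ⟨v, Fin.cons w₁ w', hv, ?_, ?_, hqv, ?_, ?_⟩
    · intro j
      induction j using Fin.cases with
      | zero =>
        simp only [Fin.cons_zero]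
        rw [ip_conj, hw₁v, map_zero]
      | succ j' => simpa using hvw' j'
    · intro i j
      induction i using Fin.cases with
      | zero =>
        induction j using Fin.cases with
        | zero => simpa using hw₁w₁
        | succ j' =>
          rw [if_neg (Fin.succ_ne_zero j').symm]
          simpa using hw₁w' j'
      | succ i' =>
        induction j using Fin.cases with
        | zero =>
          rw [if_neg (Fin.succ_ne_zero i')]
          simp only [Fin.cons_zero, Fin.cons_succ]
          rw [ip_conj, hw₁w' i', map_zero]
        | succ j' =>
          simp only [Fin.cons_succ]
          rw [horthw']
          simp [Fin.succ_inj]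
    · have e1 : ∑ j : Fin (k+1), qf A ((Fin.cons w₁ w' : Fin (k+1) → Fin d → ℂ) j)
          = qf A w₁ + ∑ j : Fin k, qf A (w' j) := by
        rw [Fin.sum_univ_succ]; simp
      have e2 : ∑ i : Fin (k+1), qf A (x' i)
          = qf A v₁ + ∑ i : Fin k, qf A (x i.succ.succ) := by
        rw [Fin.sum_univ_succ]; simp [hx']
      have e3 : ∑ i : Fin (k+2), qf A (x i)
          = qf A (x 0) + qf A (x 1) + ∑ i : Fin k, qf A (x i.succ.succ) := by
        rw [Fin.sum_univ_succ, Fin.sum_univ_succ]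
        simp [Fin.succ_zero_eq_one, add_assoc]
      rw [e1, e3]
      rw [e2] at hsumv
      linear_combination hsumv + hsum₁
    · intro u hu
      have hux' : ∀ i, ip u (x' i) = 0 := by
        intro i
        induction i using Fin.cases with
        | zero =>
          simp only [hx', Fin.cons_zero]
          rw [hv₁, ip_right, hu 0, hu 1]; ring
        | succ i' => simpa [hx'] using hu i'.succ.succ
      obtain ⟨h1, h2⟩ := hside u hux'
      refine ⟨h1, fun j => ?_⟩
      induction j using Fin.cases with
      | zero =>
        simp only [Fin.cons_zero]
        rw [hw₁, ip_right, hu 0, hu 1]; ring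
      | succ j' => simpa using h2 j'


lemma diagzero {d : ℕ} (A : Matrix (Fin d) (Fin d) ℂ) :
    ∀ k (x : Fin k → (Fin d → ℂ)),
    (∀ i j, ip (x i) (x j) = if i = j then 1 else 0) →
    (∑ i, qf A (x i)) = 0 →
    ∃ y : Fin k → (Fin d → ℂ),
      (∀ i j, ip (y i) (y j) = if i = j then 1 else 0) ∧
      (∀ i, qf A (y i) = 0) ∧
      (∀ u, (∀ i, ip u (x i) = 0) → ∀ i, ip u (y i) = 0) := by
  intro k
  induction k with
  | zero =>
    intro x _ _
    exact ⟨x, fun i => i.elim0, fun i => i.elim0, fun u _ i => i.elim0⟩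
  | succ k IH =>
    intro x horth hq
    set t : Fin (k+1) → ℝ := fun _ => 1 / (k+1) with htdef
    have htnn : ∀ i, 0 ≤ t i := fun i => by positivity
    have hknz : ((k : ℝ) + 1) ≠ 0 := by positivity
    have htsum : ∑ i, t i = 1 := by
      rw [Finset.sum_const]
      simp [htdef, Finset.card_univ]
      field_simp
    have htq : ∑ i, (t i : ℂ) * qf A (x i) = 0 := by
      have : ∑ i, (t i : ℂ) * qf A (x i) = ((1 / ((k:ℝ)+1) : ℝ) : ℂ) * ∑ i, qf A (x i) := by
        rw [Finset.mul_sum]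
      rw [this, hq, mul_zero]
    obtain ⟨v, w, hvv, hvw, horthw, hqv, hsumv, hside⟩ := merge A k x horth t htnn htsum htq
    have hqw : ∑ j, qf A (w j) = 0 := by
      rw [hqv, hq, zero_add] at hsumv
      exact hsumv
    obtain ⟨y', horthy', hqy', hsidey'⟩ := IH w horthw hqw
    have hvy' : ∀ i, ip v (y' i) = 0 := hsidey' v hvw
    refine ⟨Fin.cons v y', ?_, ?_, ?_⟩
    · intro i j
      induction i using Fin.cases with
      | zero =>
        induction j using Fin.cases with
        | zero => simpa using hvv
        | succ j' =>
          rw [if_neg (Fin.succ_ne_zero j').symm]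
          simpa using hvy' j'
      | succ i' =>
        induction j using Fin.cases with
        | zero =>
          rw [if_neg (Fin.succ_ne_zero i')]
          simp only [Fin.cons_zero, Fin.cons_succ]
          rw [ip_conj, hvy' i', map_zero]
        | succ j' =>
          simp only [Fin.cons_succ]
          rw [horthy']
          simp [Fin.succ_inj]
    · intro i
      induction i using Fin.cases with
      | zero => simpa using hqv
      | succ i' => simpa using hqy' i'
    · intro u hu
      obtain ⟨h1, h2⟩ := hside u hu
      intro i
      induction i using Fin.cases with
      | zero => simpa using h1
      | succ i' => simpa using hsidey' u h2 i'


section final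
variable {d : ℕ}

lemma ip_es (i j : Fin d) : ip (Pi.single i (1:ℂ)) (Pi.single j (1:ℂ)) = if i = j then 1 else 0 := by
  have hstar : star (Pi.single i (1:ℂ) : Fin d → ℂ) = Pi.single i (1:ℂ) := by
    ext r; simp [Pi.single_apply, apply_ite (star : ℂ → ℂ)]
  rw [ip, hstar, dotProduct_single]
  simp [Pi.single_apply, eq_comm]

lemma qf_es (A : Matrix (Fin d) (Fin d) ℂ) (i : Fin d) :
    qf A (Pi.single i (1:ℂ)) = A i i := by
  have hstar : star (Pi.single i (1:ℂ) : Fin d → ℂ) = Pi.single i (1:ℂ) := by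
    ext r; simp [Pi.single_apply, apply_ite (star : ℂ → ℂ)]
  rw [qf, hstar, Matrix.mulVec_single]
  rw [dotProduct]
  simp [Pi.single_apply]

lemma entry_eq (U B : Matrix (Fin d) (Fin d) ℂ) (i j : Fin d) :
    (Uᴴ * B * U) i j = star (fun r => U r i) ⬝ᵥ B.mulVec (fun r => U r j) := by
  simp only [Matrix.mul_apply, Matrix.conjTranspose_apply, dotProduct, mulVec,
    Pi.star_apply, Finset.sum_mul, Finset.mul_sum]
  rw [Finset.sum_comm]
  apply Finset.sum_congr rfl
  intro r _
  apply Finset.sum_congr rfl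
  intro s _
  ring

lemma main_step (A : Matrix (Fin d) (Fin d) ℂ) (h : A.trace = 0) :
    ∃ V ∈ Matrix.unitaryGroup (Fin d) ℂ, ∀ i, (Vᴴ * A * V) i i = 0 := by
  have htr : ∑ i, qf A (Pi.single i (1:ℂ)) = 0 := by
    simp only [qf_es]
    simpa [Matrix.trace, Matrix.diag] using h
  obtain ⟨y, horth, hq, -⟩ := diagzero A d (fun i => Pi.single i (1:ℂ)) (fun i j => ip_es i j) htr
  set V : Matrix (Fin d) (Fin d) ℂ := Matrix.of (fun r c => y c r) with hV
  have hVc : ∀ i, (fun r => V r i) = y i := by intro i; rfl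
  have hmem : V ∈ Matrix.unitaryGroup (Fin d) ℂ := by
    rw [Matrix.mem_unitaryGroup_iff']
    ext i j
    rw [Matrix.mul_apply, Matrix.one_apply]
    have := horth i j
    rw [ip, dotProduct] at this
    simpa [hV, Matrix.conjTranspose_apply] using this
  refine ⟨V, hmem, fun i => ?_⟩
  rw [entry_eq, hVc]
  exact hq i
end final

theorem stmt6 (d : ℕ) (M₁ M₂ : Matrix (Fin d) (Fin d) ℂ) :
    List.TFAE
      [ ∃ V ∈ Matrix.unitaryGroup (Fin d) ℂ, delta (Vᴴ * M₂ᴴ * M₁ * V) = 0,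
        ∃ (r : ℕ) (_ : d ≤ r) (W : Matrix (Fin d) (Fin r) ℂ),
          W * Wᴴ = 1 ∧ delta (Wᴴ * M₂ᴴ * M₁ * W) = 0,
        Matrix.trace (M₂ᴴ * M₁) = 0 ] := by
  tfae_have 1 → 2 := by
    rintro ⟨V, hV, hd⟩
    exact ⟨d, le_refl d, V, by
      simpa [Matrix.star_eq_conjTranspose] using Matrix.mem_unitaryGroup_iff.mp hV, hd⟩
  tfae_have 2 → 3 := by
    rintro ⟨r, hr, W, hWW, hd⟩
    have h1 : ∀ i, (Wᴴ * M₂ᴴ * M₁ * W) i i = 0 := by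
      intro i
      have := congrFun (congrFun hd i) i
      simpa [delta, Matrix.diagonal_apply_eq] using this
    have h2 : (Wᴴ * M₂ᴴ * M₁ * W).trace = 0 := by
      simp [Matrix.trace, Matrix.diag, h1]
    calc Matrix.trace (M₂ᴴ * M₁) = (M₂ᴴ * M₁ * (W * Wᴴ)).trace := by rw [hWW, mul_one]
      _ = ((M₂ᴴ * M₁ * W) * Wᴴ).trace := by rw [Matrix.mul_assoc (M₂ᴴ * M₁) W Wᴴ]
      _ = (Wᴴ * (M₂ᴴ * M₁ * W)).trace := Matrix.trace_mul_comm _ _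
      _ = (Wᴴ * M₂ᴴ * M₁ * W).trace := by rw [← Matrix.mul_assoc, ← Matrix.mul_assoc]
      _ = 0 := h2
  tfae_have 3 → 1 := by
    intro h
    obtain ⟨V, hmem, hdiag⟩ := main_step (M₂ᴴ * M₁) h
    refine ⟨V, hmem, ?_⟩
    have hassoc : Vᴴ * M₂ᴴ * M₁ * V = Vᴴ * (M₂ᴴ * M₁) * V := by
      rw [Matrix.mul_assoc Vᴴ M₂ᴴ M₁]
    rw [hassoc, delta]
    have : (fun i => (Vᴴ * (M₂ᴴ * M₁) * V) i i) = fun _ => (0:ℂ) := funext hdiag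
    rw [this, Matrix.diagonal_zero]
  tfae_finish
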